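/- Let X ⊂ ℝ^d be a finite set of n points, C ⊂ ℝ^d a finite set, ε > 0, and let σ : X → ℝ^d be a map satisfying ‖x − σ(x)‖ ≤ ε·d(x,C) for every x ∈ X, where d(x,C) := min_{c∈C} ‖x − c‖. Let X' denote the multiset {σ(x) : x ∈ X} (with multiplicities). Then for every finite set C' ⊂ ℝ^d and every p ∈ {1,…,n}: |cost_p(X',C') − cost_p(X,C')| ≤ ε·cost_p(X,C). -/

import Mathlib

/-- `topP p s` is the sum of the `p` largest entries of the multiset `s` of reals. -/
noncomputable def topP (p : ℕ) (s : Multiset ℝ) : ℝ :=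
  (((s.sort (· ≤ ·)).reverse).take p).sum

/-- The p-Centrum objective: the sum of the `p` largest distances from the points
of the multiset `s` (with multiplicity) to the nearest center in `C`. -/
noncomputable def costP (d : ℕ) (p : ℕ) (s : Multiset (EuclideanSpace ℝ (Fin d)))
    (C : Finset (EuclideanSpace ℝ (Fin d))) : ℝ :=
  topP p (s.map fun x => Metric.infDist x (C : Set (EuclideanSpace ℝ (Fin d))))

/-- Lift a sub-multiset of `s.map f` to a sub-multiset of `s`. -/
lemma exists_le_map {α β : Type*} [DecidableEq α] [DecidableEq β] (f : α → β) :
    ∀ (t : Multiset β) (s : Multiset α), t ≤ s.map f → ∃ u, u ≤ s ∧ u.map f = t := by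
  intro t
  induction t using Multiset.induction_on with
  | empty => exact fun s _ => ⟨0, by simp⟩
  | cons r t ih =>
    intro s h
    have hr : r ∈ s.map f := Multiset.mem_of_le h (Multiset.mem_cons_self _ _)
    obtain ⟨x, hx, rfl⟩ := Multiset.mem_map.mp hr
    have hs : s = x ::ₘ s.erase x := (Multiset.cons_erase hx).symm
    rw [hs, Multiset.map_cons] at h
    have h' : t ≤ (s.erase x).map f := (Multiset.cons_le_cons_iff _).mp h
    obtain ⟨u, hu, hmap⟩ := ih _ h'
    refine ⟨x ::ₘ u, ?_, by simp [hmap]⟩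
    rw [hs]
    exact Multiset.cons_le_cons _ hu

lemma sort_ne_nil {s : Multiset ℝ} (hs : s ≠ 0) : s.sort (· ≤ ·) ≠ [] := by
  intro h
  apply hs
  have := Multiset.sort_eq s (· ≤ ·)
  rw [h] at this
  simpa using this.symm

/-- The largest element of a nonempty multiset. -/
noncomputable def mtop (s : Multiset ℝ) (hs : s ≠ 0) : ℝ :=
  (s.sort (· ≤ ·)).getLast (sort_ne_nil hs)

lemma mtop_mem (s : Multiset ℝ) (hs : s ≠ 0) : mtop s hs ∈ s := by
  rw [← Multiset.mem_sort (· ≤ ·)]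
  exact List.getLast_mem _

lemma le_mtop (s : Multiset ℝ) (hs : s ≠ 0) : ∀ x ∈ s, x ≤ mtop s hs := by
  intro x hx
  have hsort : (s.sort (· ≤ ·)).Pairwise (· ≤ ·) := Multiset.pairwise_sort _ _
  have hmem : x ∈ s.sort (· ≤ ·) := (Multiset.mem_sort _).mpr hx
  have hsplit := List.dropLast_append_getLast (sort_ne_nil hs)
  rw [← hsplit] at hsort hmem
  rcases List.mem_append.mp hmem with h | h
  · rw [List.pairwise_append] at hsort
    exact hsort.2.2 x h _ (List.mem_singleton_self _)
  · rw [List.mem_singleton] at h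
    exact le_of_eq h

lemma sort_erase_mtop (s : Multiset ℝ) (hs : s ≠ 0) :
    (s.erase (mtop s hs)).sort (· ≤ ·) = (s.sort (· ≤ ·)).dropLast := by
  apply List.Perm.eq_of_pairwise' (Multiset.pairwise_sort _ _)
    ((Multiset.pairwise_sort s (· ≤ ·)).sublist (List.dropLast_sublist _))
  rw [← Multiset.coe_eq_coe, Multiset.sort_eq]
  have hsplit := List.dropLast_append_getLast (sort_ne_nil hs)
  have h1 : s = ((s.sort (· ≤ ·)).dropLast : Multiset ℝ) + {mtop s hs} := by
    conv_lhs => rw [← Multiset.sort_eq s (· ≤ ·), ← hsplit]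
    rw [← Multiset.coe_add]
    rfl
  have h2 := congrArg (fun z : Multiset ℝ => z.erase (mtop s hs)) h1
  rw [h2, add_comm, Multiset.singleton_add, Multiset.erase_cons_head]

lemma topP_decomp (s : Multiset ℝ) (hs : s ≠ 0) (p : ℕ) :
    topP (p + 1) s = mtop s hs + topP p (s.erase (mtop s hs)) := by
  have hsplit := List.dropLast_append_getLast (sort_ne_nil hs)
  have hrev : (s.sort (· ≤ ·)).reverse
      = mtop s hs :: (s.sort (· ≤ ·)).dropLast.reverse := by
    conv_lhs => rw [← hsplit]
    simp [mtop]
  rw [topP, hrev, List.take_succ_cons, List.sum_cons, topP, sort_erase_mtop]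

/-- Sum of any sub-multiset of size `p` is at most the sum of the `p` largest. -/
lemma sum_le_topP : ∀ (t s : Multiset ℝ), t ≤ s → t.sum ≤ topP t.card s := by
  intro t
  induction t using Multiset.strongInductionOn with
  | ih t ih =>
    intro s hts
    rcases eq_or_ne t 0 with rfl | ht
    · simp [topP]
    have hs : s ≠ 0 := by
      intro h; exact ht (le_antisymm (h ▸ hts) (Multiset.zero_le _))
    set m := mtop s hs with hm
    by_cases hmt : m ∈ t
    · have ht1 : t = m ::ₘ t.erase m := (Multiset.cons_erase hmt).symm
      have hcard : t.card = (t.erase m).card + 1 := by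
        rw [ht1]; simp
      have hsumt : t.sum = m + (t.erase m).sum := by
        conv_lhs => rw [ht1]
        simp
      rw [hsumt, hcard, topP_decomp s hs]
      have := ih (t.erase m) (Multiset.erase_lt.mpr hmt) (s.erase m)
        (Multiset.erase_le_erase m hts)
      linarith [this]
    · obtain ⟨a, ha⟩ := Multiset.exists_mem_of_ne_zero ht
      have hts' : t ≤ s.erase m := by
        rw [Multiset.le_iff_count]
        intro x
        rcases eq_or_ne x m with rfl | hx
        · simp [Multiset.count_eq_zero_of_notMem hmt]
        · rw [Multiset.count_erase_of_ne hx]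
          exact Multiset.le_iff_count.mp hts x
      have ham : a ≤ m := le_mtop s hs a (Multiset.mem_of_le hts ha)
      have ht1 : t = a ::ₘ t.erase a := (Multiset.cons_erase ha).symm
      have hcard : t.card = (t.erase a).card + 1 := by
        rw [ht1]; simp
      have hsumt : t.sum = a + (t.erase a).sum := by
        conv_lhs => rw [ht1]
        simp
      rw [hsumt, hcard, topP_decomp s hs]
      have := ih (t.erase a) (Multiset.erase_lt.mpr ha) (s.erase m)
        ((Multiset.erase_le a t).trans hts')
      linarith [this]

/-- The sum of the `p` largest is achieved by some sub-multiset of size `p`. -/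
lemma exists_topP (s : Multiset ℝ) (p : ℕ) (hp : p ≤ Multiset.card s) :
    ∃ t, t ≤ s ∧ t.card = p ∧ t.sum = topP p s := by
  refine ⟨((s.sort (· ≤ ·)).reverse.take p : List ℝ), ?_, ?_, ?_⟩
  · calc ((s.sort (· ≤ ·)).reverse.take p : Multiset ℝ)
        ≤ ((s.sort (· ≤ ·)).reverse : Multiset ℝ) :=
          Multiset.coe_le.mpr (List.take_sublist _ _).subperm
      _ = s := by rw [Multiset.coe_reverse, Multiset.sort_eq]
  · rw [Multiset.coe_card, List.length_take, List.length_reverse,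
      Multiset.length_sort]
    exact min_eq_left hp
  · rfl

/-- Key perturbation lemma for `topP` of mapped multisets. -/
lemma topP_map_le {α : Type*} [DecidableEq α] (s : Multiset α) (a b g : α → ℝ)
    (ε : ℝ) (hε : 0 ≤ ε) (p : ℕ) (hp : p ≤ Multiset.card s)
    (hab : ∀ x ∈ s, a x ≤ b x + ε * g x) :
    topP p (s.map a) ≤ topP p (s.map b) + ε * topP p (s.map g) := by
  classical
  obtain ⟨t, hts, htc, hsum⟩ := exists_topP (s.map a) p (by simpa using hp)
  obtain ⟨u, hus, humap⟩ := exists_le_map a t s hts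
  have huc : u.card = p := by
    rw [← htc, ← humap, Multiset.card_map]
  have h1 : (u.map a).sum ≤ (u.map b).sum + ε * (u.map g).sum := by
    rw [← Multiset.sum_map_mul_left, ← Multiset.sum_map_add]
    exact Multiset.sum_map_le_sum_map _ _ fun x hx =>
      hab x (Multiset.mem_of_le hus hx)
  have h2 : (u.map b).sum ≤ topP p (s.map b) := by
    have := sum_le_topP (u.map b) (s.map b) (Multiset.map_le_map hus)
    rwa [Multiset.card_map, huc] at this
  have h3 : (u.map g).sum ≤ topP p (s.map g) := by
    have := sum_le_topP (u.map g) (s.map g) (Multiset.map_le_map hus)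
    rwa [Multiset.card_map, huc] at this
  have h4 : ε * (u.map g).sum ≤ ε * topP p (s.map g) := by
    exact mul_le_mul_of_nonneg_left h3 hε
  rw [← hsum, ← humap]
  linarith

theorem stmt_7 {d : ℕ} (X : Finset (EuclideanSpace ℝ (Fin d)))
    (C : Finset (EuclideanSpace ℝ (Fin d))) (hC : C.Nonempty)
    (ε : ℝ) (hε : 0 < ε)
    (σ : EuclideanSpace ℝ (Fin d) → EuclideanSpace ℝ (Fin d))
    (hσ : ∀ x ∈ X, ‖x - σ x‖ ≤ ε * Metric.infDist x (C : Set (EuclideanSpace ℝ (Fin d)))) :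
    ∀ C' : Finset (EuclideanSpace ℝ (Fin d)), C'.Nonempty →
      ∀ p : ℕ, 1 ≤ p → p ≤ X.card →
        |costP d p (X.val.map σ) C' - costP d p X.val C'| ≤ ε * costP d p X.val C := by
  classical
  intro C' _ p _ hpX
  set a : EuclideanSpace ℝ (Fin d) → ℝ :=
    fun x => Metric.infDist (σ x) (C' : Set (EuclideanSpace ℝ (Fin d))) with ha
  set b : EuclideanSpace ℝ (Fin d) → ℝ :=
    fun x => Metric.infDist x (C' : Set (EuclideanSpace ℝ (Fin d))) with hb
  set g : EuclideanSpace ℝ (Fin d) → ℝ :=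
    fun x => Metric.infDist x (C : Set (EuclideanSpace ℝ (Fin d))) with hg
  have hdist : ∀ x ∈ X, dist (σ x) x ≤ ε * g x := by
    intro x hx
    rw [dist_comm, dist_eq_norm]
    exact hσ x hx
  have hab : ∀ x ∈ X.val, a x ≤ b x + ε * g x := fun x hx =>
    le_trans (Metric.infDist_le_infDist_add_dist) (by linarith [hdist x hx])
  have hba : ∀ x ∈ X.val, b x ≤ a x + ε * g x := fun x hx =>
    le_trans (Metric.infDist_le_infDist_add_dist)
      (by have := hdist x hx; rw [dist_comm] at this; linarith)
  have hc1 : costP d p (X.val.map σ) C' = topP p (X.val.map a) := by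
    rw [costP, Multiset.map_map]; rfl
  have hc2 : costP d p X.val C' = topP p (X.val.map b) := rfl
  have hc3 : costP d p X.val C = topP p (X.val.map g) := rfl
  rw [hc1, hc2, hc3, abs_sub_le_iff]
  constructor
  · have := topP_map_le X.val a b g ε hε.le p hpX hab
    linarith
  · have := topP_map_le X.val b a g ε hε.le p hpX hba
    linarith
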